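/- The EWS-last sequential choice rule under the expanded membership profile ρ* abides by the Equality Code: for every applicant set I, no nonempty set J ⊆ 𝒥 ∩ I satisfies that every member of J is rejected under ρ* but accepted when the members of J are given membership only in category e. -/

import Mathlib

attribute [local instance] Classical.propDecidable

noncomputable section

variable {ι R : Type*} [Fintype ι] [DecidableEq ι] [Fintype R] [DecidableEq R]

/-- Eligibility sets: everyone is eligible for the open category (`none`),
and `elig c` is the set of members of VR-protected category `c`. -/
def eligOf (elig : R → Finset ι) : Option R → Finset ι
  | none => (Finset.univ : Finset ι)
  | some c => elig c

/-- Aggregate choice: all individuals chosen across all categories. -/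
def aggC (C : Finset ι → Option R → Finset ι) (I : Finset ι) : Finset ι :=
  Finset.univ.biUnion fun v => C I v

/-- `C` is a choice rule for capacities `q` and eligibility `elig`: each category chooses
eligible applicants up to capacity, and no individual is chosen by two categories. -/
def IsChoiceRule (q : Option R → ℕ) (elig : R → Finset ι)
    (C : Finset ι → Option R → Finset ι) : Prop :=
  ∀ I : Finset ι,
    (∀ v, C I v ⊆ I ∩ eligOf elig v) ∧
    (∀ v, (C I v).card ≤ q v) ∧
    (∀ v v', v ≠ v' → Disjoint (C I v) (C I v'))

/-- Non-wastefulness: no position remains idle while an eligible applicant is unchosen. -/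
def NonWasteful (q : Option R → ℕ) (elig : R → Finset ι)
    (C : Finset ι → Option R → Finset ι) : Prop :=
  ∀ (I : Finset ι) (v : Option R) (j : ι),
    j ∈ I → j ∉ aggC C I → (C I v).card < q v → j ∉ eligOf elig v

/-- No justified envy: a chosen individual outscores every eligible entirely-unchosen applicant. -/
def NoJustifiedEnvy (σ : ι → ℝ) (elig : R → Finset ι)
    (C : Finset ι → Option R → Finset ι) : Prop :=
  ∀ (I : Finset ι) (v : Option R) (i j : ι),
    i ∈ C I v → j ∈ I → j ∈ eligOf elig v → j ∉ aggC C I → σ j < σ i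

/-- Compliance with VR protections: a VR recipient implies the open category is full, with
every open-category recipient scoring strictly higher. -/
def CompliesVR (σ : ι → ℝ) (q : Option R → ℕ)
    (C : Finset ι → Option R → Finset ι) : Prop :=
  ∀ (I : Finset ι) (c : R) (i : ι), i ∈ C I (some c) →
    (C I none).card = q none ∧ ∀ j ∈ C I none, σ i < σ j

/-- The (at most) `k` highest merit-score members of `S`. -/
def topK (σ : ι → ℝ) (S : Finset ι) (k : ℕ) : Finset ι :=
  S.filter fun i => (S.filter fun j => σ i ≤ σ j).card ≤ k

/-- The Over-and-Above choice rule: open positions go to the top-merit applicants; then each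
VR category's quota is filled by the highest-merit remaining eligible members. -/
def OA (σ : ι → ℝ) (q : Option R → ℕ) (elig : R → Finset ι)
    (I : Finset ι) : Option R → Finset ι
  | none => topK σ I (q none)
  | some c => topK σ ((I \ topK σ I (q none)) ∩ elig c) (q (some c))

/-- The sequential choice rule: categories are processed in the order given by the list,
each filling its positions by serial dictatorship on the remaining eligible applicants. -/
def seqAssign (σ : ι → ℝ) (q : Option R → ℕ) (elig : R → Finset ι) :
    List (Option R) → Finset ι → Option R → Finset ι
  | [], _, _ => ∅
  | v :: rest, I, u =>
    let chosen := topK σ (I ∩ eligOf elig v) (q v)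
    if u = v then chosen else seqAssign σ q elig rest (I \ chosen) u

/-- Eligibility sets induced by a membership profile `ρ`. -/
def eligρ (ρ : ι → Finset R) (c : R) : Finset ι :=
  Finset.univ.filter fun i => c ∈ ρ i

/-- Aggregate outcome of the Over-and-Above rule under membership profile `ρ`. -/
def aggOA (σ : ι → ℝ) (q : Option R → ℕ) (ρ : ι → Finset R) (I : Finset ι) : Finset ι :=
  aggC (OA σ q (eligρ ρ)) I

/-- The profile `(ρ₋ⱼ, ρ̃ⱼ)`: each member of `J` is reassigned membership `{e}` only. -/
def updProf (ρ : ι → Finset R) (e : R) (J : Finset ι) : ι → Finset R :=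
  fun i => if i ∈ J then {e} else ρ i

/-- `J ⊆ 𝒥 ∩ I` suffers from a violation of the Equality Code under the Over-and-Above rule
with profile `ρ` for `I`: every member of `J` is unchosen under `ρ` but chosen once the
members of `J` are reassigned membership `{e}`. -/
def Suffers (σ : ι → ℝ) (q : Option R → ℕ) (ρ : ι → Finset R) (e : R)
    (JJ I J : Finset ι) : Prop :=
  J ⊆ JJ ∩ I ∧ ∀ j ∈ J, j ∉ aggOA σ q ρ I ∧ j ∈ aggOA σ q (updProf ρ e J) I

/-- `J` is a maximal set of individuals suffering from a violation of the Equality Code. -/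
def MaximalSuffers (σ : ι → ℝ) (q : Option R → ℕ) (ρ : ι → Finset R) (e : R)
    (JJ I J : Finset ι) : Prop :=
  J ⊆ (JJ ∩ I) \ aggOA σ q ρ I ∧
  Suffers σ q ρ e JJ I J ∧
  ∀ J' ⊆ (JJ ∩ I) \ aggOA σ q ρ I, J ⊂ J' →
    ¬ Suffers σ q ρ e JJ I J' ∧ J ⊆ aggOA σ q (updProf ρ e J') I

/-- The expanded profile `ρ*`: members of `𝒥` get an additional membership of `e`. -/
def ρstar (ρ : ι → Finset R) (e : R) (JJ : Finset ι) : ι → Finset R :=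
  fun i => if i ∈ JJ then insert e (ρ i) else ρ i

/-- Aggregate outcome of the sequential choice rule under profile `ρ` and the given order. -/
def aggSeq (σ : ι → ℝ) (q : Option R → ℕ) (ρ : ι → Finset R)
    (order : List (Option R)) (I : Finset ι) : Finset ι :=
  Finset.univ.biUnion (seqAssign σ q (eligρ ρ) order I)

/-- The EWS-last order of precedence: open first, caste-based categories (listed by `L`), `e` last. -/
def ewsLastOrder (e : R) (L : List R) : List (Option R) :=
  (none : Option R) :: (L.map some ++ [some e])

/-- the EWS-last sequential rule under the expanded profile `ρ*` abides by the
Equality Code: no nonempty `J ⊆ 𝒥 ∩ I` has all its members rejected under `ρ*` yet accepted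
when given membership only in `e`. -/
lemma topK_erase (σ : ι → ℝ) (hσ : Function.Injective σ) (S : Finset ι) (k : ℕ)
    {j : ι} (hj : j ∉ topK σ S k) : topK σ (S.erase j) k = topK σ S k := by
  by_cases hjS : j ∈ S
  · have hFj : ¬ (S.filter fun l => σ j ≤ σ l).card ≤ k := by
      intro hc
      exact hj (by simp [topK, hjS, hc])
    ext i
    simp only [topK, Finset.mem_filter, Finset.mem_erase, Finset.filter_erase]
    constructor
    · rintro ⟨hij, hiS, hcard⟩
      refine ⟨hiS, ?_⟩
      by_cases hord : σ i ≤ σ j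
      · exfalso
        have hij' : σ i < σ j := lt_of_le_of_ne hord (fun h => hij (hσ h))
        have hsub : insert i (S.filter fun l => σ j ≤ σ l) ⊆
            S.filter fun l => σ i ≤ σ l := by
          intro x hx
          rcases Finset.mem_insert.mp hx with rfl | hx
          · exact Finset.mem_filter.mpr ⟨hiS, le_refl _⟩
          · rcases Finset.mem_filter.mp hx with ⟨hxS, hxj⟩
            exact Finset.mem_filter.mpr ⟨hxS, le_of_lt (lt_of_lt_of_le hij' hxj)⟩
        have hiP : i ∉ (S.filter fun l => σ j ≤ σ l) := by
          intro hx
          exact absurd (Finset.mem_filter.mp hx).2 (not_le.mpr hij')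
        have hjP : j ∈ (S.filter fun l => σ i ≤ σ l) :=
          Finset.mem_filter.mpr ⟨hjS, hord⟩
        have h1 : (S.filter fun l => σ j ≤ σ l).card + 1 ≤
            (S.filter fun l => σ i ≤ σ l).card := by
          have := Finset.card_le_card hsub
          rwa [Finset.card_insert_of_notMem hiP] at this
        have h2 : ((S.filter fun l => σ i ≤ σ l).erase j).card =
            (S.filter fun l => σ i ≤ σ l).card - 1 :=
          Finset.card_erase_of_mem hjP
        omega
      · have hjn : j ∉ (S.filter fun l => σ i ≤ σ l) :=
          fun hx => hord (Finset.mem_filter.mp hx).2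
        rwa [Finset.erase_eq_of_notMem hjn] at hcard
    · rintro ⟨hiS, hcard⟩
      have hij : i ≠ j := by
        rintro rfl; exact hFj hcard
      exact ⟨hij, hiS, le_trans (Finset.card_erase_le) hcard⟩
  · rw [Finset.erase_eq_of_notMem hjS]

lemma topK_sdiff (σ : ι → ℝ) (hσ : Function.Injective σ) (S : Finset ι) (k : ℕ)
    (J : Finset ι) (hJ : ∀ j ∈ J, j ∉ topK σ S k) : topK σ (S \ J) k = topK σ S k := by
  induction J using Finset.induction_on with
  | empty => simp
  | @insert a J ha ih =>
    have h1 : S \ insert a J = (S \ J).erase a := by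
      ext x; simp [Finset.mem_sdiff, Finset.mem_erase]; tauto
    have ih' := ih (fun j hj => hJ j (Finset.mem_insert_of_mem hj))
    rw [h1, topK_erase σ hσ _ k (by rw [ih']; exact hJ a (Finset.mem_insert_self a J)), ih']

lemma seqAssign_eq_empty (σ : ι → ℝ) (q : Option R → ℕ) (E : R → Finset ι) :
    ∀ (order : List (Option R)) (I : Finset ι) (u : Option R), u ∉ order →
      seqAssign σ q E order I u = ∅ := by
  intro order
  induction order with
  | nil => intro I u _; rfl
  | cons v rest ih =>
    intro I u hu
    have huv : u ≠ v := fun h => hu (h ▸ List.mem_cons_self (a := v) (l := rest))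
    have hur : u ∉ rest := fun h => hu (List.mem_cons_of_mem v h)
    simp only [seqAssign, if_neg huv]
    exact ih _ u hur

lemma seqAssign_congr (σ : ι → ℝ) (hσ : Function.Injective σ) (q : Option R → ℕ)
    (E E' : R → Finset ι) (J : Finset ι)
    (hE : ∀ v : Option R, eligOf E' v = eligOf E v ∨ eligOf E' v = eligOf E v \ J) :
    ∀ (order : List (Option R)), order.Nodup → ∀ I : Finset ι,
      (∀ j ∈ J, ∀ u, j ∉ seqAssign σ q E order I u) →
      ∀ u, seqAssign σ q E' order I u = seqAssign σ q E order I u := by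
  intro order
  induction order with
  | nil => intro _ I _ u; rfl
  | cons v rest ih =>
    intro hnd I hrej u
    have hndr : rest.Nodup := (List.nodup_cons.mp hnd).2
    have hv : v ∉ rest := (List.nodup_cons.mp hnd).1
    have hJch : ∀ j ∈ J, j ∉ topK σ (I ∩ eligOf E v) (q v) := by
      intro j hj
      have := hrej j hj v
      simpa [seqAssign] using this
    have hch' : topK σ (I ∩ eligOf E' v) (q v) = topK σ (I ∩ eligOf E v) (q v) := by
      rcases hE v with h | h
      · rw [h]
      · have h2 : I ∩ eligOf E' v = (I ∩ eligOf E v) \ J := by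
          rw [h]; ext x; simp [Finset.mem_sdiff, Finset.mem_inter]; tauto
        rw [h2]
        exact topK_sdiff σ hσ _ _ J hJch
    have hrej' : ∀ j ∈ J, ∀ u, j ∉ seqAssign σ q E rest
        (I \ topK σ (I ∩ eligOf E v) (q v)) u := by
      intro j hj w
      by_cases hwv : w = v
      · subst hwv
        rw [seqAssign_eq_empty σ q E rest _ w hv]
        exact Finset.notMem_empty j
      · have := hrej j hj w
        simpa [seqAssign, if_neg hwv] using this
    by_cases huv : u = v
    · subst huv
      simp only [seqAssign, if_pos rfl]
      exact hch'
    · simp only [seqAssign, if_neg huv]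
      rw [hch']
      exact ih hndr _ hrej' u

theorem ewsLast_abides_equality_code (σ : ι → ℝ) (hσ : Function.Injective σ)
    (q : Option R → ℕ) (ρ : ι → Finset R) (hρ : ∀ i, (ρ i).card ≤ 1) (e : R)
    (JJ : Finset ι) (hJJ : ∀ j ∈ JJ, (ρ j).Nonempty ∧ e ∉ ρ j)
    (L : List R) (hLnd : L.Nodup) (heL : e ∉ L) (hLall : ∀ c : R, c ≠ e → c ∈ L) :
    ∀ I : Finset ι, ∀ J : Finset ι, J.Nonempty → J ⊆ JJ ∩ I →
      ¬ (∀ j ∈ J, j ∉ aggSeq σ q (ρstar ρ e JJ) (ewsLastOrder e L) I ∧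
          j ∈ aggSeq σ q (updProf (ρstar ρ e JJ) e J) (ewsLastOrder e L) I) := by
  intro I J hJne hJsub hcontra
  set Estar := eligρ (ρstar ρ e JJ) with hEstar
  set Eupd := eligρ (updProf (ρstar ρ e JJ) e J) with hEupd
  have hJJJ : ∀ j ∈ J, j ∈ JJ := fun j hj => (Finset.mem_inter.mp (hJsub hj)).1
  have hE : ∀ v : Option R, eligOf Eupd v = eligOf Estar v ∨
      eligOf Eupd v = eligOf Estar v \ J := by
    intro v
    match v with
    | none => left; rfl
    | some c =>
      by_cases hce : c = e
      · left
        subst hce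
        ext i
        simp only [eligOf, hEstar, hEupd, eligρ, Finset.mem_filter,
          Finset.mem_univ, true_and]
        simp only [updProf, ρstar]
        by_cases hiJ : i ∈ J
        · simp [hiJ, hJJJ i hiJ]
        · simp [hiJ]
      · right
        ext i
        simp only [eligOf, hEstar, hEupd, eligρ, Finset.mem_sdiff,
          Finset.mem_filter, Finset.mem_univ, true_and]
        simp only [updProf, ρstar]
        by_cases hiJ : i ∈ J
        · simp [hiJ, hce]
        · simp [hiJ]
  have hnd : (ewsLastOrder e L).Nodup := by
    simp only [ewsLastOrder, List.nodup_cons, List.mem_append, List.mem_map,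
      List.mem_singleton]
    constructor
    · rintro (⟨x, _, h⟩ | h) <;> cases h
    · rw [List.nodup_append]
      refine ⟨hLnd.map (Option.some_injective R), List.nodup_singleton _, ?_⟩
      intro x hx y hx' hxy
      rcases List.mem_map.mp hx with ⟨c, hcL, rfl⟩
      rw [List.mem_singleton] at hx'
      exact heL (by rwa [Option.some_inj.mp (hxy.trans hx')] at hcL)
  have hrej : ∀ j ∈ J, ∀ u, j ∉ seqAssign σ q Estar (ewsLastOrder e L) I u := by
    intro j hj u hmem
    exact (hcontra j hj).1 (Finset.mem_biUnion.mpr ⟨u, Finset.mem_univ u, hmem⟩)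
  have hkey := seqAssign_congr σ hσ q Estar Eupd J hE (ewsLastOrder e L) hnd I hrej
  obtain ⟨j, hj⟩ := hJne
  obtain ⟨hrejj, haccj⟩ := hcontra j hj
  obtain ⟨u, _, hmem⟩ := Finset.mem_biUnion.mp haccj
  rw [hkey u] at hmem
  exact hrej j hj u hmem
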